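/- For every λ > 0 and r > 0, the coefficient c_λ(r,x) of z^x in the power series expansion of (1 − 4rz(1+z))^{−λ} satisfies c_λ(r,x) ~ (m(r)^λ/Γ(λ))·x^{λ−1}·γ(r)^{−x} as x → ∞. -/

import Mathlib

open Filter

noncomputable def gam (r : ℝ) : ℝ := (Real.sqrt ((1 + r) / r) - 1) / 2

noncomputable def mfun (r : ℝ) : ℝ := (1 + Real.sqrt (r / (1 + r))) / 2

open Finset Topology

namespace CoeffAsymp


noncomputable def bin (lam : ℝ) (n : ℕ) : ℝ :=
  (∏ i ∈ Finset.range n, (lam + i)) / (Nat.factorial n)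

lemma bin_zero (lam : ℝ) : bin lam 0 = 1 := by simp [bin]

lemma bin_succ (lam : ℝ) (n : ℕ) :
    bin lam (n + 1) = bin lam n * ((lam + n) / (n + 1)) := by
  have h1 : ((n:ℝ) + 1) ≠ 0 := by positivity
  have h2 : ((Nat.factorial n : ℕ) : ℝ) ≠ 0 := by exact_mod_cast (Nat.factorial_pos n).ne'
  rw [bin, bin, Finset.prod_range_succ, Nat.factorial_succ]
  push_cast
  field_simp

lemma bin_pos {lam : ℝ} (hlam : 0 < lam) (n : ℕ) : 0 < bin lam n := by
  induction n with
  | zero => simp [bin_zero]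
  | succ n ih =>
      rw [bin_succ]
      have : 0 < (lam + n) / (n + 1) := by positivity
      exact mul_pos ih this

lemma tendsto_aux (a b : ℝ) (hb : 0 ≤ b) :
    Tendsto (fun n : ℕ => (a + n) / (b + n)) atTop (𝓝 1) := by
  have h1 : Tendsto (fun n : ℕ => (b + (n:ℝ))) atTop atTop :=
    tendsto_atTop_add_const_left _ b tendsto_natCast_atTop_atTop
  have h2 : Tendsto (fun n : ℕ => (a - b) * (b + (n:ℝ))⁻¹) atTop (𝓝 ((a - b) * 0)) :=
    tendsto_const_nhds.mul h1.inv_tendsto_atTop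
  have h3 : Tendsto (fun n : ℕ => 1 + (a - b) * (b + (n:ℝ))⁻¹) atTop (𝓝 (1 + (a - b) * 0)) :=
    tendsto_const_nhds.add h2
  simp only [mul_zero, add_zero] at h3
  apply h3.congr'
  filter_upwards [eventually_ge_atTop 1] with n hn
  have hbn : (0:ℝ) < b + n := by
    have : (1:ℝ) ≤ (n:ℝ) := by exact_mod_cast hn
    linarith
  field_simp
  ring

lemma summable_of_ratio_tendsto {f : ℕ → ℝ} {ρ : ℕ → ℝ} {l : ℝ} (hl : l < 1)
    (hρ : Tendsto ρ atTop (𝓝 l)) (h : ∀ᶠ n in atTop, |f (n + 1)| ≤ ρ n * |f n|) :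
    Summable f := by
  have hl2 : l < (l + 1) / 2 := by linarith
  apply summable_of_ratio_norm_eventually_le (r := (l + 1) / 2) (by linarith)
  filter_upwards [(tendsto_order.1 hρ).2 _ hl2, h] with n h1 h2
  rw [Real.norm_eq_abs, Real.norm_eq_abs]
  calc |f (n + 1)| ≤ ρ n * |f n| := h2
    _ ≤ (l + 1) / 2 * |f n| := mul_le_mul_of_nonneg_right h1.le (abs_nonneg _)

lemma abs_term_succ {lam : ℝ} (hlam : 0 < lam) (t : ℝ) (n : ℕ) :
    |bin lam (n + 1) * t ^ (n + 1)| = ((lam + n) / (n + 1) * |t|) * |bin lam n * t ^ n| := by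
  have h1 : 0 < (lam + n) / (n + 1) := by positivity
  rw [abs_mul, abs_mul, abs_pow, abs_pow, abs_of_pos (bin_pos hlam _),
    abs_of_pos (bin_pos hlam _), bin_succ, pow_succ]
  ring

lemma summable_bin_mul_pow {lam : ℝ} (hlam : 0 < lam) {t : ℝ} (ht : |t| < 1) :
    Summable (fun n => bin lam n * t ^ n) := by
  apply summable_of_ratio_tendsto ht (ρ := fun n => (lam + n) / (n + 1) * |t|)
  · have := (tendsto_aux lam 1 zero_le_one).mul_const |t|
    simp only [one_mul] at this
    apply this.congr
    intro n
    rw [add_comm (1:ℝ) (n:ℝ)]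
  · filter_upwards with n
    rw [abs_term_succ hlam]


lemma g_zero {lam : ℝ} : (∑' n, bin lam n * (0:ℝ) ^ n) = 1 := by
  rw [tsum_eq_single 0 (fun n hn => by simp [zero_pow hn])]
  simp [bin_zero]

theorem hasSum_binomial {lam : ℝ} (hlam : 0 < lam) {t : ℝ} (ht : |t| < 1) :
    HasSum (fun n => bin lam n * t ^ n) ((1 - t) ^ (-lam)) := by
  set b : ℝ := (1 + |t|) / 2 with hbdef
  have habs := abs_nonneg t
  have hb0 : 0 < b := by rw [hbdef]; positivity
  have htb : |t| < b := by rw [hbdef]; linarith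
  have hb1 : b < 1 := by rw [hbdef]; linarith
  -- summability on the unit ball
  have hsum : ∀ s : ℝ, |s| < 1 → Summable fun n => bin lam n * s ^ n :=
    fun s hs => summable_bin_mul_pow hlam hs
  set g : ℝ → ℝ := fun s => ∑' n, bin lam n * s ^ n with hgdef
  -- derivative series bound
  set M : ℕ → ℝ := fun n => bin lam n * (n * b ^ (n - 1)) with hMdef
  have hMnonneg : ∀ n, 0 ≤ M n := fun n => by
    have := (bin_pos hlam n).le
    have := hb0.le
    positivity
  have hMsum : Summable M := by
    apply summable_of_ratio_tendsto (l := b) hb1 (ρ := fun n => (lam + n) / n * b)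
    · have := (tendsto_aux lam 0 le_rfl).mul_const b
      simp only [one_mul, zero_add] at this
      exact this
    · filter_upwards [eventually_ge_atTop 1] with n hn
      have hn1 : (1:ℝ) ≤ (n:ℝ) := by exact_mod_cast hn
      have hMn : M (n + 1) = ((lam + n) / n * b) * M n := by
        rw [hMdef]
        simp only
        rw [bin_succ]
        have hnn : (n:ℝ) ≠ 0 := by linarith
        have hbn : b ^ (n + 1 - 1) = b ^ (n - 1) * b := by
          rw [Nat.add_sub_cancel, ← pow_succ]
          congr 1
          omega
        rw [hbn]
        push_cast
        field_simp
      rw [abs_of_nonneg (hMnonneg _), abs_of_nonneg (hMnonneg _), hMn]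
  have hbound : ∀ (n : ℕ) (y : ℝ), y ∈ Set.Ioo (-b) b →
      ‖bin lam n * (n * y ^ (n - 1))‖ ≤ M n := by
    intro n y hy
    have hyb : |y| ≤ b := le_of_lt (abs_lt.mpr ⟨hy.1, hy.2⟩)
    rw [Real.norm_eq_abs, abs_mul, abs_mul, abs_of_pos (bin_pos hlam n), Nat.abs_cast, abs_pow]
    apply mul_le_mul_of_nonneg_left _ (bin_pos hlam n).le
    apply mul_le_mul_of_nonneg_left _ (Nat.cast_nonneg n)
    exact pow_le_pow_left₀ (abs_nonneg y) hyb _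
  have h0mem : (0:ℝ) ∈ Set.Ioo (-b) b := ⟨by linarith, hb0⟩
  have hD : ∀ s ∈ Set.Ioo (-b) b,
      HasDerivAt g (∑' n, bin lam n * (n * s ^ (n - 1))) s := by
    intro s hs
    exact hasDerivAt_tsum_of_isPreconnected hMsum isOpen_Ioo (convex_Ioo _ _).isPreconnected
      (fun n y _ => (hasDerivAt_pow n y).const_mul (bin lam n))
      hbound h0mem (by simpa using hsum 0 (by simpa using hb0.trans hb1)) hs
  have key : ∀ s ∈ Set.Ioo (-b) b,
      (1 - s) * (∑' n, bin lam n * (n * s ^ (n - 1))) = lam * g s := by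
    intro s hs
    have hs1 : |s| < 1 := lt_trans (abs_lt.mpr ⟨hs.1, hs.2⟩) hb1
    have h0 : HasSum (fun n => bin lam n * s ^ n) (g s) := (hsum s hs1).hasSum
    have hDs : Summable fun n => bin lam n * (n * s ^ (n - 1)) :=
      Summable.of_norm_bounded hMsum (fun n => hbound n s hs)
    set D : ℝ := ∑' n, bin lam n * (n * s ^ (n - 1)) with hDdef
    have hD1 : HasSum (fun n => bin lam n * (n * s ^ (n - 1))) D := hDs.hasSum
    have h1 : HasSum (fun n : ℕ => bin lam (n + 1) * ((n + 1 : ℕ) * s ^ (n + 1 - 1))) D := by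
      rw [hasSum_nat_add_iff (f := fun n => bin lam n * (n * s ^ (n - 1))) 1]
      simpa using hD1
    have hfe : (fun n : ℕ => bin lam (n + 1) * ((n + 1 : ℕ) * s ^ (n + 1 - 1)))
        = fun n : ℕ => bin lam n * (lam + n) * s ^ n := by
      funext n
      rw [bin_succ, Nat.add_sub_cancel]
      have : ((n:ℝ) + 1) ≠ 0 := by positivity
      push_cast
      field_simp
    rw [hfe] at h1
    have h2 : HasSum (fun n => bin lam n * (lam + n) * s ^ (n + 1)) (s * D) := by
      have := h1.mul_left s
      apply this.congr_fun
      intro n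
      ring
    have hfe2 : (fun n : ℕ => bin lam n * (lam + n) * s ^ (n + 1))
        = fun n : ℕ => bin lam (n + 1) * ((n + 1 : ℕ) : ℝ) * s ^ (n + 1) := by
      funext n
      rw [bin_succ]
      have : ((n:ℝ) + 1) ≠ 0 := by positivity
      push_cast
      field_simp
    rw [hfe2] at h2
    have h3 : HasSum (fun n : ℕ => bin lam n * (n : ℝ) * s ^ n) (s * D) := by
      have := (hasSum_nat_add_iff (f := fun n : ℕ => bin lam n * (n : ℝ) * s ^ n) 1).mp h2
      simpa using this
    have h4 := h1.sub h3
    have h5 : HasSum (fun n => lam * (bin lam n * s ^ n)) (D - s * D) := by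
      apply h4.congr_fun
      intro n
      ring
    have h6 : HasSum (fun n => lam * (bin lam n * s ^ n)) (lam * g s) := h0.mul_left lam
    have := h5.unique h6
    linarith [this]
  have hzero : ∀ s ∈ Set.Ioo (-b) b,
      HasDerivAt (fun y => g y * (1 - y) ^ lam) 0 s := by
    intro s hs
    have h1s : 0 < 1 - s := by have := hs.2; linarith
    have hg' := hD s hs
    have hx : HasDerivAt (fun y : ℝ => 1 - y) (-1) s := by
      simpa using (hasDerivAt_id s).const_sub 1
    have hpow := Real.hasDerivAt_rpow_const (x := 1 - s) (p := lam) (Or.inl (ne_of_gt h1s))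
    have hr : HasDerivAt (fun y : ℝ => (1 - y) ^ lam) (lam * (1 - s) ^ (lam - 1) * (-1)) s :=
      HasDerivAt.comp s hpow hx
    have hmul := hg'.mul hr
    refine hmul.congr_deriv ?_
    symm
    have hk := key s hs
    have hsplit : (1 - s) ^ lam = (1 - s) * (1 - s) ^ (lam - 1) := by
      conv_lhs => rw [show lam = 1 + (lam - 1) by ring]
      rw [Real.rpow_add h1s, Real.rpow_one]
    rw [hsplit]
    linear_combination (-(1 - s) ^ (lam - 1)) * hk
  have hconst : g t * (1 - t) ^ lam = 1 := by
    rcases eq_or_ne t 0 with rfl | ht0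
    · simp [hgdef, g_zero]
    · have habs' : |t| < b := htb
      have hsub : Set.Icc (-|t|) |t| ⊆ Set.Ioo (-b) b := by
        intro y hy
        exact ⟨by linarith [hy.1], by linarith [hy.2]⟩
      have hcont : ContinuousOn (fun y => g y * (1 - y) ^ lam) (Set.Icc (-|t|) |t|) :=
        fun y hy => ((hzero y (hsub hy)).continuousAt).continuousWithinAt
      have hder : ∀ y ∈ Set.Ico (-|t|) |t|,
          HasDerivWithinAt (fun y => g y * (1 - y) ^ lam) 0 (Set.Ici y) y :=
        fun y hy => ((hzero y (hsub (Set.Ico_subset_Icc_self hy))).hasDerivWithinAt)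
      have hc := constant_of_has_deriv_right_zero hcont hder
      have e1 := hc t ⟨neg_abs_le t, le_abs_self t⟩
      have e2 := hc 0 ⟨by linarith [abs_nonneg t], abs_nonneg t⟩
      rw [e1, ← e2]
      simp [hgdef, g_zero]
  have hmem : t ∈ Set.Ioo (-b) b := ⟨(abs_lt.mp htb).1, (abs_lt.mp htb).2⟩
  have h1t : 0 < 1 - t := by have := (abs_lt.mp ht).2; linarith
  have hA : ((1 : ℝ) - t) ^ lam ≠ 0 := (Real.rpow_pos_of_pos h1t lam).ne'
  have hgval : g t = (1 - t) ^ (-lam) := by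
    rw [Real.rpow_neg h1t.le, inv_eq_one_div, eq_div_iff hA]
    exact hconst
  rw [← hgval]
  exact (hsum t ht).hasSum


lemma tendsto_bin_gamma {lam : ℝ} (hlam : 0 < lam) :
    Tendsto (fun k : ℕ => bin lam k * Real.Gamma lam / (k : ℝ) ^ (lam - 1)) atTop (𝓝 1) := by
  have hG : 0 < Real.Gamma lam := Real.Gamma_pos_of_pos hlam
  have h1 : Tendsto (fun k : ℕ => Real.Gamma lam * (((0:ℝ) + k) / (lam + k) / Real.GammaSeq lam k))
      atTop (𝓝 (Real.Gamma lam * (1 / Real.Gamma lam))) :=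
    tendsto_const_nhds.mul ((tendsto_aux 0 lam hlam.le).div (Real.GammaSeq_tendsto_Gamma lam) hG.ne')
  rw [mul_one_div, div_self hG.ne'] at h1
  apply h1.congr'
  filter_upwards [eventually_ge_atTop 1] with k hk
  have hk0 : (0:ℝ) < (k:ℝ) := by exact_mod_cast Nat.pos_of_ne_zero (by omega)
  have hprod : (0:ℝ) < ∏ j ∈ range k, (lam + j) := by
    apply Finset.prod_pos
    intro j _
    positivity
  have hfac : (0:ℝ) < (Nat.factorial k : ℝ) := by exact_mod_cast Nat.factorial_pos k
  have hlk : (0:ℝ) < lam + k := by positivity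
  have hGS : Real.GammaSeq lam k = (k:ℝ) ^ lam * (Nat.factorial k : ℝ) /
      ((∏ j ∈ range k, (lam + j)) * (lam + k)) := by
    rw [Real.GammaSeq, Finset.prod_range_succ]
  have hrp : (0:ℝ) < (k:ℝ) ^ lam := Real.rpow_pos_of_pos hk0 _
  have hrp1 : (0:ℝ) < (k:ℝ) ^ (lam - 1) := Real.rpow_pos_of_pos hk0 _
  have hpowrel : (k:ℝ) ^ lam = (k:ℝ) ^ (lam - 1) * k := by
    have h := Real.rpow_add hk0 (lam - 1) 1
    rw [Real.rpow_one] at h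
    rw [show lam - 1 + 1 = lam by ring] at h
    exact h
  rw [hGS, bin, hpowrel]
  field_simp
  ring

lemma bin_mono {lam : ℝ} (hlam : 1 ≤ lam) : Monotone (bin lam) := by
  apply monotone_nat_of_le_succ
  intro n
  rw [bin_succ]
  have hb := bin_pos (by linarith : (0:ℝ) < lam) n
  nth_rewrite 1 [← mul_one (bin lam n)]
  apply mul_le_mul_of_nonneg_left _ hb.le
  rw [le_div_iff₀ (by positivity : (0:ℝ) < (n:ℝ) + 1)]
  linarith

lemma bin_le_rpow {lam : ℝ} (hlam : 0 < lam) (hl1 : lam ≤ 1) (k : ℕ) :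
    bin lam k ≤ ((k : ℝ) + 1) ^ (lam - 1) := by
  induction k with
  | zero => simp [bin_zero]
  | succ k ih =>
      have hk1 : (0:ℝ) < (k:ℝ) + 1 := by positivity
      have hratio : (lam + k) / ((k:ℝ) + 1) ≤ (((k:ℝ) + 2) / ((k:ℝ) + 1)) ^ (lam - 1) := by
        have hs0 : (0:ℝ) < 1 / ((k:ℝ) + 1) := by positivity
        have hbern := rpow_one_add_le_one_add_mul_self (s := 1 / ((k:ℝ) + 1))
          (by linarith) (by linarith : (0:ℝ) ≤ 1 - lam) (by linarith)
        have hpos : (0:ℝ) < (1 + 1 / ((k:ℝ) + 1)) ^ (1 - lam) :=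
          Real.rpow_pos_of_pos (by linarith) _
        have hkey : (lam + k) / ((k:ℝ) + 1) * (1 + 1 / ((k:ℝ) + 1)) ^ (1 - lam) ≤ 1 := by
          have h1 : (lam + k) / ((k:ℝ) + 1) * (1 + 1 / ((k:ℝ) + 1)) ^ (1 - lam)
              ≤ (lam + k) / ((k:ℝ) + 1) * (1 + (1 - lam) * (1 / ((k:ℝ) + 1))) := by
            apply mul_le_mul_of_nonneg_left hbern
            positivity
          have h2 : (lam + k) / ((k:ℝ) + 1) * (1 + (1 - lam) * (1 / ((k:ℝ) + 1))) ≤ 1 := by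
            rw [div_mul_eq_mul_div, div_le_one hk1]
            have expand : (lam + k) * (1 + (1 - lam) * (1 / ((k:ℝ) + 1)))
                = ((k:ℝ) + 1) - (1 - lam) ^ 2 * (1 / ((k:ℝ) + 1)) := by
              field_simp
              ring
            rw [expand]
            have : (0:ℝ) ≤ (1 - lam) ^ 2 * (1 / ((k:ℝ) + 1)) := by positivity
            linarith
          linarith
        have hinv : (lam + k) / ((k:ℝ) + 1) ≤ ((1 + 1 / ((k:ℝ) + 1)) ^ (1 - lam))⁻¹ := by
          rw [inv_eq_one_div, le_div_iff₀ hpos]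
          exact hkey
        have heq : ((1 + 1 / ((k:ℝ) + 1)) ^ (1 - lam))⁻¹ = (1 + 1 / ((k:ℝ) + 1)) ^ (lam - 1) := by
          rw [← Real.rpow_neg (by linarith : (0:ℝ) ≤ 1 + 1 / ((k:ℝ) + 1))]
          norm_num
        rw [heq] at hinv
        have : (1:ℝ) + 1 / ((k:ℝ) + 1) = ((k:ℝ) + 2) / ((k:ℝ) + 1) := by
          field_simp
          ring
        rwa [this] at hinv
      rw [bin_succ]
      push_cast
      calc bin lam k * ((lam + k) / ((k:ℝ) + 1))
          ≤ ((k:ℝ) + 1) ^ (lam - 1) * ((((k:ℝ) + 2) / ((k:ℝ) + 1)) ^ (lam - 1)) := by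
            apply mul_le_mul ih hratio (by positivity) (by positivity)
        _ = ((k:ℝ) + 1 + 1) ^ (lam - 1) := by
            rw [← Real.mul_rpow (by positivity) (by positivity)]
            congr 1
            field_simp
            ring

lemma tendsto_conv {lam q : ℝ} (hlam : 0 < lam) (hq0 : 0 < q) (hq1 : q < 1) :
    Tendsto (fun x : ℕ => ∑ j ∈ Finset.range (x + 1),
        (bin lam j * (-q) ^ j) * (bin lam (x - j) * Real.Gamma lam / (x : ℝ) ^ (lam - 1)))
      atTop (𝓝 ((1 + q) ^ (-lam))) := by
  have hG : 0 < Real.Gamma lam := Real.Gamma_pos_of_pos hlam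
  set T : ℕ → ℕ → ℝ := fun x j => if j ≤ x then
      (bin lam j * (-q) ^ j) * (bin lam (x - j) * Real.Gamma lam / (x : ℝ) ^ (lam - 1)) else 0
    with hTdef
  have habsT : ∀ x j, j ≤ x →
      |T x j| = (bin lam j * q ^ j) * (bin lam (x - j) * Real.Gamma lam / (x : ℝ) ^ (lam - 1)) := by
    intro x j hj
    rw [hTdef]
    simp only [if_pos hj]
    rw [abs_mul, abs_mul, abs_pow, abs_neg, abs_of_pos hq0, abs_of_pos (bin_pos hlam j)]
    congr 1
    rw [abs_of_nonneg]
    apply div_nonneg (mul_nonneg (bin_pos hlam _).le hG.le) (Real.rpow_nonneg (Nat.cast_nonneg x) _)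
  have hTnonneg2 : ∀ x j, 0 ≤ bin lam (x - j) * Real.Gamma lam / (x : ℝ) ^ (lam - 1) :=
    fun x j => div_nonneg (mul_nonneg (bin_pos hlam _).le hG.le)
      (Real.rpow_nonneg (Nat.cast_nonneg x) _)
  -- columns
  have hcol : ∀ j : ℕ, Tendsto (fun x => T x j) atTop (𝓝 (bin lam j * (-q) ^ j)) := by
    intro j
    have hmain : Tendsto (fun x : ℕ => bin lam (x - j) * Real.Gamma lam / (x : ℝ) ^ (lam - 1))
        atTop (𝓝 1) := by
      have f1 : Tendsto
          (fun x : ℕ => bin lam (x - j) * Real.Gamma lam / ((x - j : ℕ) : ℝ) ^ (lam - 1))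
          atTop (𝓝 1) := by
        have := (tendsto_bin_gamma hlam).comp (tendsto_sub_atTop_nat j)
        exact this
      have inner : Tendsto (fun x : ℕ => ((x - j : ℕ) : ℝ) / (x : ℝ)) atTop (𝓝 1) := by
        have h2 : Tendsto (fun x : ℕ => 1 - (j : ℝ) / (x : ℝ)) atTop (𝓝 (1 - 0)) :=
          tendsto_const_nhds.sub (tendsto_const_div_atTop_nhds_zero_nat (j:ℝ))
        rw [sub_zero] at h2
        apply h2.congr'
        filter_upwards [eventually_ge_atTop (j + 1)] with x hx
        have hj : j ≤ x := by omega
        have hx0 : (0:ℝ) < (x : ℝ) := by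
          have : 0 < x := by omega
          exact_mod_cast this
        rw [Nat.cast_sub hj]
        field_simp
      have f2 : Tendsto (fun x : ℕ => (((x - j : ℕ) : ℝ) / (x : ℝ)) ^ (lam - 1)) atTop (𝓝 1) := by
        have hcont := (Real.continuousAt_rpow_const 1 (lam - 1) (Or.inl one_ne_zero)).tendsto
        have := hcont.comp inner
        simpa [Function.comp_def] using this
      have hmul := f1.mul f2
      rw [one_mul] at hmul
      apply hmul.congr'
      filter_upwards [eventually_ge_atTop (j + 1)] with x hx
      have hj' : j ≤ x := by omega
      have hxj : (0:ℝ) < ((x - j : ℕ) : ℝ) := by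
        have : 0 < x - j := by omega
        exact_mod_cast this
      have hx0 : (0:ℝ) < (x : ℝ) := by
        have : 0 < x := by omega
        exact_mod_cast this
      rw [Real.div_rpow hxj.le hx0.le]
      have hne : ((x - j : ℕ) : ℝ) ^ (lam - 1) ≠ 0 := (Real.rpow_pos_of_pos hxj _).ne'
      have hne2 : ((x : ℕ) : ℝ) ^ (lam - 1) ≠ 0 := (Real.rpow_pos_of_pos hx0 _).ne'
      rw [div_mul_div_comm,
        mul_comm (bin lam (x - j) * Real.Gamma lam) (((x - j : ℕ):ℝ) ^ (lam - 1)),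
        mul_div_mul_left _ _ hne]
    have hT := hmain.const_mul (bin lam j * (-q) ^ j)
    rw [mul_one] at hT
    apply hT.congr'
    filter_upwards [eventually_ge_atTop j] with x hx
    rw [hTdef]
    simp only [if_pos hx]
  -- binomial value
  have hqabs : |(-q)| < 1 := by rw [abs_neg, abs_of_pos hq0]; exact hq1
  have hval : (∑' j, bin lam j * (-q) ^ j) = (1 + q) ^ (-lam) := by
    have := (hasSum_binomial hlam hqabs).tsum_eq
    rwa [sub_neg_eq_add] at this
  -- the finite sums agree with the tsum
  have hfin : ∀ x : ℕ, (∑' j, T x j) = ∑ j ∈ Finset.range (x + 1),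
      (bin lam j * (-q) ^ j) * (bin lam (x - j) * Real.Gamma lam / (x : ℝ) ^ (lam - 1)) := by
    intro x
    rw [tsum_eq_sum (s := Finset.range (x + 1))
      (fun j hj => by rw [hTdef]; simp only; rw [if_neg (by simpa using hj)])]
    apply Finset.sum_congr rfl
    intro j hj
    rw [hTdef]
    simp only
    rw [if_pos (Finset.mem_range_succ_iff.mp hj)]
  -- dominated convergence, two cases for the bound
  have main : Tendsto (fun x : ℕ => ∑' j, T x j) atTop (𝓝 ((1 + q) ^ (-lam))) := by
    rw [← hval]
    rcases le_or_gt 1 lam with hl1 | hl1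
    · -- lam ≥ 1
      obtain ⟨C, hC⟩ := (tendsto_bin_gamma hlam).bddAbove_range
      have hCmem : ∀ x : ℕ, bin lam x * Real.Gamma lam / (x:ℝ) ^ (lam - 1) ≤ C :=
        fun x => hC (Set.mem_range_self x)
      have hC0 : (0:ℝ) ≤ C := le_trans (hTnonneg2 0 0) (by simpa using hCmem 0)
      apply tendsto_tsum_of_dominated_convergence
        (bound := fun j => (bin lam j * q ^ j) * C)
        (((summable_bin_mul_pow hlam (t := q) (by rwa [abs_of_pos hq0])).mul_right C))
        hcol
      filter_upwards [eventually_ge_atTop 1] with x hx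
      intro j
      rw [Real.norm_eq_abs]
      rcases le_or_gt j x with hj | hj
      · rw [habsT x j hj]
        apply mul_le_mul_of_nonneg_left _ (by have := (bin_pos hlam j).le; positivity)
        have hx0 : (0:ℝ) < (x:ℝ) ^ (lam - 1) := by
          apply Real.rpow_pos_of_pos
          have : 0 < x := by omega
          exact_mod_cast this
        calc bin lam (x - j) * Real.Gamma lam / (x:ℝ) ^ (lam - 1)
            ≤ bin lam x * Real.Gamma lam / (x:ℝ) ^ (lam - 1) := by
              gcongr
              exact bin_mono hl1 (Nat.sub_le x j)
          _ ≤ C := hCmem x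
      · have hnj : ¬ j ≤ x := by omega
        rw [hTdef]
        simp only [if_neg hnj]
        rw [abs_zero]
        exact mul_nonneg (by have := (bin_pos hlam j).le; positivity) hC0
    · -- lam < 1
      have hsumb : Summable (fun j : ℕ => bin lam j * q ^ j * ((j:ℝ) + 1)) := by
        apply summable_of_ratio_tendsto (l := q) hq1
          (ρ := fun j => ((lam + j) / (j + 1) * q) * (((j:ℝ) + 2) / ((j:ℝ) + 1)))
        · have t1 := (tendsto_aux lam 1 zero_le_one).mul_const q
          rw [one_mul] at t1
          have t2 := tendsto_aux 2 1 zero_le_one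
          have := t1.mul t2
          rw [mul_one] at this
          apply this.congr
          intro n
          ring
        · filter_upwards with j
          have h1 : (0:ℝ) < (j:ℝ) + 1 := by positivity
          have heq : bin lam (j + 1) * q ^ (j + 1) * (((j:ℕ):ℝ) + 1 + 1)
              = (((lam + j) / (j + 1) * q) * (((j:ℝ) + 2) / ((j:ℝ) + 1)))
                * (bin lam j * q ^ j * ((j:ℝ) + 1)) := by
            rw [bin_succ, pow_succ]
            field_simp
            ring
          have hnn : ∀ k : ℕ, (0:ℝ) ≤ bin lam k * q ^ k * ((k:ℝ) + 1) := by
            intro k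
            have := (bin_pos hlam k).le
            positivity
          rw [abs_of_nonneg (hnn (j+1)), abs_of_nonneg (hnn j)]
          push_cast
          rw [heq]
      apply tendsto_tsum_of_dominated_convergence
        (bound := fun j => (bin lam j * q ^ j * ((j:ℝ) + 1)) * Real.Gamma lam)
        (hsumb.mul_right _) hcol
      filter_upwards [eventually_ge_atTop 1] with x hx
      intro j
      rw [Real.norm_eq_abs]
      rcases le_or_gt j x with hj | hj
      · rw [habsT x j hj]
        have hX : (0:ℝ) < (x:ℝ) := by
          have : 0 < x := by omega
          exact_mod_cast this
        have hXp : (0:ℝ) < (x:ℝ) ^ (lam - 1) := Real.rpow_pos_of_pos hX _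
        have ha : (0:ℝ) < ((x - j : ℕ) : ℝ) + 1 := by positivity
        have hstep1 : bin lam (x - j) * Real.Gamma lam / (x:ℝ) ^ (lam - 1)
            ≤ (((x - j : ℕ):ℝ) + 1) ^ (lam - 1) * Real.Gamma lam / (x:ℝ) ^ (lam - 1) := by
          gcongr
          exact bin_le_rpow hlam hl1.le (x - j)
        have hstep2 : (((x - j : ℕ):ℝ) + 1) ^ (lam - 1) / (x:ℝ) ^ (lam - 1) ≤ (j:ℝ) + 1 := by
          set a : ℝ := ((x - j : ℕ):ℝ) + 1 with hadef
          have hfrac : (x:ℝ) / a ≤ (j:ℝ) + 1 := by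
            rw [div_le_iff₀ ha]
            have hcast : ((x - j : ℕ):ℝ) = (x:ℝ) - (j:ℝ) := by
              rw [Nat.cast_sub hj]
            rw [hadef, hcast]
            have hjx : (j:ℝ) ≤ (x:ℝ) := by exact_mod_cast hj
            have hj0 : (0:ℝ) ≤ (j:ℝ) := Nat.cast_nonneg j
            nlinarith [mul_nonneg hj0 (sub_nonneg.mpr hjx)]
          have hratio : a ^ (lam - 1) / (x:ℝ) ^ (lam - 1) = ((x:ℝ) / a) ^ (1 - lam) := by
            rw [Real.div_rpow hX.le ha.le]
            rw [show lam - 1 = -(1 - lam) by ring, Real.rpow_neg ha.le, Real.rpow_neg hX.le]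
            field_simp
          rw [hratio]
          calc ((x:ℝ) / a) ^ (1 - lam) ≤ ((j:ℝ) + 1) ^ (1 - lam) := by
                apply Real.rpow_le_rpow (by positivity) hfrac (by linarith)
            _ ≤ ((j:ℝ) + 1) ^ (1:ℝ) := by
                apply Real.rpow_le_rpow_of_exponent_le (by simp) (by linarith)
            _ = (j:ℝ) + 1 := Real.rpow_one _
        have hsecond : bin lam (x - j) * Real.Gamma lam / (x:ℝ) ^ (lam - 1)
            ≤ ((j:ℝ) + 1) * Real.Gamma lam := by
          apply hstep1.trans
          have hre : (((x - j:ℕ):ℝ) + 1) ^ (lam - 1) * Real.Gamma lam / (x:ℝ) ^ (lam - 1)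
              = ((((x - j:ℕ):ℝ) + 1) ^ (lam - 1) / (x:ℝ) ^ (lam - 1)) * Real.Gamma lam := by
            ring
          rw [hre]
          exact mul_le_mul_of_nonneg_right hstep2 hG.le
        calc (bin lam j * q ^ j) * (bin lam (x - j) * Real.Gamma lam / (x:ℝ) ^ (lam - 1))
            ≤ (bin lam j * q ^ j) * (((j:ℝ) + 1) * Real.Gamma lam) := by
              apply mul_le_mul_of_nonneg_left hsecond
              have := (bin_pos hlam j).le
              positivity
          _ = bin lam j * q ^ j * ((j:ℝ) + 1) * Real.Gamma lam := by ring
      · have hnj : ¬ j ≤ x := by omega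
        rw [hTdef]
        simp only [if_neg hnj]
        rw [abs_zero]
        have := (bin_pos hlam j).le
        positivity
  exact main.congr hfin

lemma coeff_unique {c c' : ℕ → ℝ} {f : ℝ → ℝ} {ε : ℝ} (hε : 0 < ε)
    (h1 : ∀ z : ℝ, |z| < ε → HasSum (fun n => c n * z ^ n) (f z))
    (h2 : ∀ z : ℝ, |z| < ε → HasSum (fun n => c' n * z ^ n) (f z)) : c = c' := by
  suffices H : ∀ d : ℕ → ℝ, (∀ z : ℝ, |z| < ε → HasSum (fun n => d n * z ^ n) (f z)) →
      HasFPowerSeriesAt f (FormalMultilinearSeries.ofScalars ℝ d) 0 by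
    have heq := (H c h1).eq_formalMultilinearSeries (H c' h2)
    exact FormalMultilinearSeries.ofScalars_series_injective (𝕜 := ℝ) (E := ℝ) heq
  intro d hd
  have h34 : |3 * ε / 4| < ε := by rw [abs_of_pos (by linarith)]; linarith
  have hsum34 := (hd _ h34).summable
  have htend := hsum34.tendsto_atTop_zero
  have habs : Tendsto (fun n => |d n * (3 * ε / 4) ^ n|) atTop (𝓝 0) := by
    have := htend.abs
    simpa using this
  obtain ⟨C, hC⟩ := habs.bddAbove_range
  have hbound : ∀ n : ℕ, |d n| * (3 * ε / 4) ^ n ≤ C := by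
    intro n
    have := hC (Set.mem_range_self n)
    rwa [abs_mul, abs_pow, abs_of_pos (by linarith : (0:ℝ) < 3 * ε / 4)] at this
  set r34 : NNReal := ⟨3 * ε / 4, by linarith⟩ with hr34
  have hrad : (r34 : ENNReal) ≤ (FormalMultilinearSeries.ofScalars ℝ d).radius := by
    apply FormalMultilinearSeries.le_radius_of_bound _ C
    intro n
    rw [FormalMultilinearSeries.ofScalars_norm]
    exact_mod_cast hbound n
  set r2 : NNReal := ⟨ε / 2, by linarith⟩ with hr2
  refine ⟨(r2 : ENNReal), ?_, ?_, ?_⟩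
  · refine le_trans ?_ hrad
    rw [ENNReal.coe_le_coe]
    rw [← NNReal.coe_le_coe]
    simp only [hr2, hr34, NNReal.coe_mk]
    change ε / 2 ≤ 3 * ε / 4
    linarith
  · exact_mod_cast (show (0:ℝ) < ε / 2 by linarith)
  · intro y hy
    rw [mem_emetric_ball_zero_iff, enorm_eq_nnnorm, ENNReal.coe_lt_coe, ← NNReal.coe_lt_coe] at hy
    simp only [coe_nnnorm, Real.norm_eq_abs, hr2, NNReal.coe_mk] at hy
    change |y| < ε / 2 at hy
    have hyε : |y| < ε := by linarith
    have := hd y hyε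
    rw [zero_add]
    apply HasSum.congr_fun this
    intro n
    rw [FormalMultilinearSeries.ofScalars_apply_eq, smul_eq_mul]
end CoeffAsymp

open CoeffAsymp

theorem coefficient_asymptotics (lam r : ℝ) (hlam : 0 < lam) (hr : 0 < r)
    (c : ℕ → ℝ) (δ : ℝ) (hδ : 0 < δ)
    (hc : ∀ z : ℝ, |z| < δ →
      HasSum (fun x : ℕ => c x * z ^ x) ((1 - 4 * r * z * (1 + z)) ^ (-lam))) :
    Tendsto (fun x : ℕ =>
        c x / ((mfun r ^ lam / Real.Gamma lam) * (x : ℝ) ^ (lam - 1) * gam r ^ (-(x : ℝ))))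
      atTop (nhds 1) := by
  have hG : 0 < Real.Gamma lam := Real.Gamma_pos_of_pos hlam
  set s : ℝ := Real.sqrt ((1 + r) / r) with hsdef
  have hfrac : 1 < (1 + r) / r := by rw [lt_div_iff₀ hr]; linarith
  have hs1 : 1 < s := by
    rw [hsdef, show (1:ℝ) = Real.sqrt 1 by simp]
    exact Real.sqrt_lt_sqrt (by norm_num) (by rw [Real.sqrt_one]; exact hfrac)
  have hs0 : 0 < s := by linarith
  have hss : s ^ 2 = (1 + r) / r := Real.sq_sqrt (by positivity)
  have hrs : r * s ^ 2 = 1 + r := by rw [hss]; field_simp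
  have hγ : gam r = (s - 1) / 2 := by rw [gam, ← hsdef]
  have hγ0 : 0 < gam r := by rw [hγ]; linarith
  have h1γ : 0 < 1 + gam r := by linarith
  have hkey : 4 * r * (gam r * (1 + gam r)) = 1 := by
    rw [hγ]; linear_combination hrs
  have hsqrtinv : Real.sqrt (r / (1 + r)) = s⁻¹ := by
    rw [show r / (1 + r) = ((1 + r) / r)⁻¹ by rw [inv_div], hsdef, Real.sqrt_inv]
  have hm : mfun r = (1 + gam r) / (1 + 2 * gam r) := by
    rw [mfun, hsqrtinv, hγ]
    have hs' : s ≠ 0 := hs0.ne'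
    field_simp
    rw [show (1:ℝ) + (s - 1) = s by ring, mul_div_cancel_left₀ _ hs']
    ring
  have hm0 : 0 < mfun r := by
    rw [hm]
    have : 0 < 1 + 2 * gam r := by linarith
    positivity
  set q : ℝ := gam r / (1 + gam r) with hqdef
  have hq0 : 0 < q := div_pos hγ0 h1γ
  have hq1 : q < 1 := by rw [hqdef, div_lt_one h1γ]; linarith
  have h1q : 1 + q = (mfun r)⁻¹ := by
    rw [hqdef, hm]
    have h12 : (0:ℝ) < 1 + 2 * gam r := by linarith
    field_simp
    ring
  have hmq : ((1:ℝ) + q) ^ (-lam) = mfun r ^ lam := by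
    rw [h1q, Real.inv_rpow hm0.le, Real.rpow_neg hm0.le, inv_inv]
  set c' : ℕ → ℝ := fun x => ∑ k ∈ Finset.range (x + 1),
      (bin lam k * (gam r)⁻¹ ^ k) * (bin lam (x - k) * (-(1 + gam r)⁻¹) ^ (x - k)) with hc'def
  have hc' : ∀ z : ℝ, |z| < gam r →
      HasSum (fun x => c' x * z ^ x) ((1 - 4 * r * z * (1 + z)) ^ (-lam)) := by
    intro z hz
    have hz1 : |z / gam r| < 1 := by
      rw [abs_div, abs_of_pos hγ0, div_lt_one hγ0]; exact hz
    have hz2 : |(-(z / (1 + gam r)))| < 1 := by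
      rw [abs_neg, abs_div, abs_of_pos h1γ, div_lt_one h1γ]
      linarith
    have hA := hasSum_binomial hlam hz1
    have hB := hasSum_binomial hlam hz2
    have hnA : Summable fun n => ‖bin lam n * (z / gam r) ^ n‖ := by
      have h := summable_bin_mul_pow hlam (t := |z / gam r|) (by rwa [abs_abs])
      apply h.congr
      intro n
      rw [Real.norm_eq_abs, abs_mul, abs_pow, abs_of_pos (bin_pos hlam n)]
    have hnB : Summable fun n => ‖bin lam n * (-(z / (1 + gam r))) ^ n‖ := by
      have h := summable_bin_mul_pow hlam (t := |(-(z / (1 + gam r)))|) (by rwa [abs_abs])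
      apply h.congr
      intro n
      rw [Real.norm_eq_abs, abs_mul, abs_pow, abs_of_pos (bin_pos hlam n)]
    have hCau := hasSum_sum_range_mul_of_summable_norm hnA hnB
    rw [hA.tsum_eq, hB.tsum_eq] at hCau
    have hval : ((1:ℝ) - z / gam r) ^ (-lam) * ((1:ℝ) - -(z / (1 + gam r))) ^ (-lam)
        = ((1:ℝ) - 4 * r * z * (1 + z)) ^ (-lam) := by
      rw [sub_neg_eq_add]
      have e1 : (0:ℝ) ≤ 1 - z / gam r := by
        have hlt : z / gam r < 1 := by
          rw [div_lt_one hγ0]; exact lt_of_le_of_lt (le_abs_self z) hz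
        linarith
      have e2 : (0:ℝ) ≤ 1 + z / (1 + gam r) := by
        have hlt : -(1:ℝ) < z / (1 + gam r) := by
          rw [neg_lt, ← neg_div, div_lt_one h1γ]
          linarith [neg_le_abs z]
        linarith
      rw [← Real.mul_rpow e1 e2]
      congr 1
      have hγne : gam r ≠ 0 := hγ0.ne'
      have h1γne : (1 + gam r) ≠ 0 := h1γ.ne'
      field_simp
      linear_combination (z + z ^ 2) * hkey
    rw [hval] at hCau
    apply hCau.congr_fun
    intro x
    rw [hc'def]
    simp only
    rw [Finset.sum_mul]
    apply Finset.sum_congr rfl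
    intro k hk
    have hkx : k ≤ x := Finset.mem_range_succ_iff.mp hk
    have hzpow : z ^ k * z ^ (x - k) = z ^ x := by
      rw [← pow_add]
      congr 1
      omega
    have t1 : (z / gam r) ^ k = (gam r)⁻¹ ^ k * z ^ k := by
      rw [div_eq_mul_inv, mul_pow, mul_comm]
    have t2 : (-(z / (1 + gam r))) ^ (x - k)
        = (-(1 + gam r)⁻¹) ^ (x - k) * z ^ (x - k) := by
      rw [show -(z / (1 + gam r)) = (-(1 + gam r)⁻¹) * z by rw [div_eq_mul_inv]; ring, mul_pow]
    rw [t1, t2, ← hzpow]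
    ring
  have hceq : c = c' := by
    apply coeff_unique (f := fun z => ((1:ℝ) - 4 * r * z * (1 + z)) ^ (-lam))
      (ε := min δ (gam r)) (lt_min hδ hγ0)
    · exact fun z hz => hc z (lt_of_lt_of_le hz (min_le_left _ _))
    · exact fun z hz => hc' z (lt_of_lt_of_le hz (min_le_right _ _))
  have hconv := tendsto_conv hlam hq0 hq1
  rw [hmq] at hconv
  have hrel : ∀ x : ℕ, c' x * gam r ^ x * Real.Gamma lam / (x:ℝ) ^ (lam - 1)
      = ∑ j ∈ Finset.range (x + 1),
        (bin lam j * (-q) ^ j) * (bin lam (x - j) * Real.Gamma lam / (x:ℝ) ^ (lam - 1)) := by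
    intro x
    rw [← Finset.sum_range_reflect (fun j => (bin lam j * (-q) ^ j)
      * (bin lam (x - j) * Real.Gamma lam / (x:ℝ) ^ (lam - 1))) (x + 1)]
    rw [hc'def]
    simp only
    rw [Finset.sum_mul, Finset.sum_mul, Finset.sum_div]
    apply Finset.sum_congr rfl
    intro k hk
    have hkx : k ≤ x := Finset.mem_range_succ_iff.mp hk
    have hx1 : x + 1 - 1 - k = x - k := by omega
    rw [hx1]
    have hxxk : x - (x - k) = k := by omega
    rw [hxxk]
    have h1 : (-q) ^ (x - k) = gam r ^ (x - k) * (-(1 + gam r)⁻¹) ^ (x - k) := by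
      rw [← mul_pow]
      congr 1
      rw [hqdef, div_eq_mul_inv]
      ring
    have h2 : gam r ^ (x - k) = gam r ^ x * ((gam r)⁻¹) ^ k := by
      rw [inv_pow, pow_sub₀ _ hγ0.ne' hkx]
    rw [h1, h2]
    ring
  have H : Tendsto (fun x : ℕ => c' x * gam r ^ x * Real.Gamma lam / (x:ℝ) ^ (lam - 1))
      atTop (𝓝 (mfun r ^ lam)) := by
    apply hconv.congr
    intro x
    exact (hrel x).symm
  have hml : 0 < mfun r ^ lam := Real.rpow_pos_of_pos hm0 _
  have H2 := H.div_const (mfun r ^ lam)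
  rw [div_self hml.ne'] at H2
  apply H2.congr'
  filter_upwards [eventually_ge_atTop 1] with x hx
  have hX : (0:ℝ) < (x:ℝ) := by
    have : 0 < x := by omega
    exact_mod_cast this
  have hXp : (0:ℝ) < (x:ℝ) ^ (lam - 1) := Real.rpow_pos_of_pos hX _
  have hgp : (0:ℝ) < gam r ^ x := pow_pos hγ0 x
  have hrpow : gam r ^ (-(x:ℝ)) = (gam r ^ x)⁻¹ := by
    rw [Real.rpow_neg hγ0.le, Real.rpow_natCast]
  rw [hceq, hrpow]
  simp only [div_eq_mul_inv, mul_inv, inv_inv, inv_pow]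
  ring
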